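/- For every x ∈ K \ 𝒰, the graph-closure switching set agrees with the reduced switching set: Σ̃(x) = Σ°(x). -/

import Mathlib

open Filter Topology MeasureTheory Set Metric Bornology RealInnerProductSpace
open scoped ENNReal NNReal

noncomputable section

namespace Bif

abbrev Xs (d : ℕ) : Type := EuclideanSpace ℝ (Fin d)
abbrev Ys (m : ℕ) : Type := EuclideanSpace ℝ (Fin m)
abbrev Zs (m d : ℕ) : Type := WithLp 2 (Ys m × Xs d)

variable {d m n : ℕ}

/-- The point `(y, x)` in `Y × ℝ^d` equipped with the product Euclidean (ℓ²) norm. -/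
def ptYX (y : Ys m) (x : Xs d) : Zs m d := (WithLp.equiv 2 (Ys m × Xs d)).symm (y, x)

def projY (p : Zs m d) : Ys m := ((WithLp.equiv 2 (Ys m × Xs d)) p).1

def projX (p : Zs m d) : Xs d := ((WithLp.equiv 2 (Ys m × Xs d)) p).2

/-- `f` is locally Lipschitz on `s`: every point of `s` has a relative
neighborhood on which `f` is Lipschitz. -/
def LocLipOn {α β : Type*} [PseudoEMetricSpace α] [PseudoEMetricSpace β]
    (s : Set α) (f : α → β) : Prop :=
  ∀ x ∈ s, ∃ C : NNReal, ∃ t ∈ 𝓝[s] x, LipschitzOnWith C f t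

/-- The solution set `F(x) = {f_1(x), …, f_n(x)}`. -/
def Fset (f : Fin n → Xs d → Ys m) (x : Xs d) : Set (Ys m) :=
  Set.range fun i => f i x

/-- The reduced Voronoi switching set `Σ°(x)`. -/
def Sigma0 (f : Fin n → Xs d → Ys m) (x : Xs d) : Set (Ys m) :=
  {y | ∃ i j : Fin n, f i x ≠ f j x ∧ ‖y - f i x‖ = ‖y - f j x‖ ∧
        ∀ k, ‖y - f i x‖ ≤ ‖y - f k x‖}

/-- The graph-closure switching set `Σ̃(x₀)`: the graph of `Σ̃` is the closure of
the graph of `Σ°` (over base points in `K`). -/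
def SigmaTilde (K : Set (Xs d)) (f : Fin n → Xs d → Ys m) (x0 : Xs d) : Set (Ys m) :=
  {y | (x0, y) ∈ closure {p : Xs d × Ys m | p.1 ∈ K ∧ p.2 ∈ Sigma0 f p.1}}

/-- `x₀` has a stable collapse pattern: on a relative neighborhood `U ⊆ K` of `x₀`
there is a partition (equivalence relation) of the branch indices such that two
branches agree at a point of `U` iff they lie in the same cluster. -/
def StableAt (K : Set (Xs d)) (f : Fin n → Xs d → Ys m) (x0 : Xs d) : Prop :=
  ∃ U ∈ 𝓝[K] x0, U ⊆ K ∧ ∃ R : Fin n → Fin n → Prop, Equivalence R ∧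
    ∀ x ∈ U, ∀ i j : Fin n, (f i x = f j x ↔ R i j)

/-- The unstable collapse set `𝒰 = K \ S`. -/
def Unstable (K : Set (Xs d)) (f : Fin n → Xs d → Ys m) : Set (Xs d) :=
  {x ∈ K | ¬ StableAt K f x}

/-- `P` is the priority nearest selector: `P y x = f i x` where `i` is the
smallest index minimizing `‖y - f i x‖`. -/
def IsPrioritySelector (f : Fin n → Xs d → Ys m) (P : Ys m → Xs d → Ys m) : Prop :=
  ∀ (y : Ys m) (x : Xs d), ∃ i : Fin n, P y x = f i x ∧
    (∀ j, ‖y - f i x‖ ≤ ‖y - f j x‖) ∧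
    (∀ j, (∀ k, ‖y - f j x‖ ≤ ‖y - f k x‖) → i ≤ j)

/-- On `closure K \ K`, `f` takes the value of the limit of `f` along `K` when this
limit exists, and `0` otherwise (limit-or-zero extension of the branch maps). -/
def IsLimitExtension (K : Set (Xs d)) (f : Fin n → Xs d → Ys m) : Prop :=
  ∀ i : Fin n, ∀ x ∈ closure K \ K,
    Tendsto (f i) (𝓝[K] x) (𝓝 (f i x)) ∨
    ((¬ ∃ L : Ys m, Tendsto (f i) (𝓝[K] x) (𝓝 L)) ∧ f i x = 0)

/-- `𝒟`: the points of `closure K` at which some (extended) branch fails to be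
locally Lipschitz. -/
def DSet (K : Set (Xs d)) (f : Fin n → Xs d → Ys m) : Set (Xs d) :=
  {x ∈ closure K | ∃ i : Fin n,
    ¬ ∃ C : NNReal, ∃ t ∈ 𝓝[closure K] x, LipschitzOnWith C (f i) t}

/-- The joint bad set `ℬ ⊆ Y × closure K`. -/
def BadSet (K : Set (Xs d)) (f : Fin n → Xs d → Ys m) : Set (Zs m d) :=
  {p | projX p ∈ DSet K f ∪ closure (Unstable K f) ∨ projY p ∈ SigmaTilde K f (projX p)}

/-- `ρ(y, x) = dist((y, x), ℬ)` in the product Euclidean norm. -/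
def rhoB (K : Set (Xs d)) (f : Fin n → Xs d → Ys m) (y : Ys m) (x : Xs d) : ℝ :=
  Metric.infDist (ptYX y x) (BadSet K f)

/-- `ω(y, x) = ρ(y, x) / (1 + ρ(y, x))`. -/
def omegaB (K : Set (Xs d)) (f : Fin n → Xs d → Ys m) (y : Ys m) (x : Xs d) : ℝ :=
  rhoB K f y x / (1 + rhoB K f y x)

/-- The safe tube `𝒮(R, s)`. -/
def STube (K : Set (Xs d)) (f : Fin n → Xs d → Ys m) (R s : ℝ) : Set (Ys m × Xs d) :=
  {q | q.2 ∈ closure K ∧ ‖q.1‖ ≤ R ∧ s ≤ omegaB K f q.1 q.2}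

/-- The set whose supremum is the safe-set profile `H₁(R, s)`. -/
def H1set (K : Set (Xs d)) (f : Fin n → Xs d → Ys m) (P : Ys m → Xs d → Ys m)
    (R s : ℝ) : Set ℝ :=
  {r | ∃ y x z, (y, x) ∈ STube K f R s ∧ (y, z) ∈ STube K f R s ∧ x ≠ z ∧
       r = ‖P y x - P y z‖ / ‖x - z‖}

/-- The set whose supremum is the safe-set profile `H₂(R, s)`. -/
def H2set (K : Set (Xs d)) (f : Fin n → Xs d → Ys m) (P : Ys m → Xs d → Ys m)
    (R s : ℝ) : Set ℝ :=
  {r | ∃ y x, (y, x) ∈ STube K f R s ∧ r = ‖P y x‖}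

def H1 (K : Set (Xs d)) (f : Fin n → Xs d → Ys m) (P : Ys m → Xs d → Ys m) (R s : ℝ) : ℝ :=
  sSup (H1set K f P R s)

def H2 (K : Set (Xs d)) (f : Fin n → Xs d → Ys m) (P : Ys m → Xs d → Ys m) (R s : ℝ) : ℝ :=
  sSup (H2set K f P R s)

/-- `λ_R(s) = 1 / (H₁(R, s) + H₂(R, s) + 1)`. -/
def lamB (K : Set (Xs d)) (f : Fin n → Xs d → Ys m) (P : Ys m → Xs d → Ys m)
    (R s : ℝ) : ℝ :=
  1 / (H1 K f P R s + H2 K f P R s + 1)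

/-- `Θ_R(r) = ∫₀^r λ_R(s) ds`. -/
def ThetaB (K : Set (Xs d)) (f : Fin n → Xs d → Ys m) (P : Ys m → Xs d → Ys m)
    (R r : ℝ) : ℝ :=
  ∫ s in (0:ℝ)..r, lamB K f P R s

/-- The damping factor `η(y, x)`. -/
def etaB (K : Set (Xs d)) (f : Fin n → Xs d → Ys m) (P : Ys m → Xs d → Ys m)
    (y : Ys m) (x : Xs d) : ℝ :=
  ThetaB K f P (1 + ‖y‖) (omegaB K f y x) /
    (1 + ThetaB K f P (1 + ‖y‖) (omegaB K f y x))

/-- The recurrent operator `g(y, x) = (1 − η(y, x)) y + η(y, x) P_y(x)`. -/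
def gB (K : Set (Xs d)) (f : Fin n → Xs d → Ys m) (P : Ys m → Xs d → Ys m)
    (y : Ys m) (x : Xs d) : Ys m :=
  (1 - etaB K f P y x) • y + etaB K f P y x • P y x

/-- For every stable input `x ∈ K \ 𝒰`, the graph-closure
switching set agrees with the reduced switching set: `Σ̃(x) = Σ°(x)`. -/
theorem statement12 {d m n : ℕ}
    (K : Set (Xs d)) (hK : IsBounded K)
    (f : Fin n → Xs d → Ys m) (hf : ∀ i, LocLipOn K (f i)) :
    ∀ x ∈ K \ Unstable K f, SigmaTilde K f x = Sigma0 f x := by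
  rintro x ⟨hxK, hxU⟩
  have hst : StableAt K f x := by
    by_contra h; exact hxU ⟨hxK, h⟩
  obtain ⟨U, hU, hUK, R, hRe, hR⟩ := hst
  have hxmemU : x ∈ U := mem_of_mem_nhdsWithin hxK hU
  have hcont : ∀ i, Tendsto (f i) (𝓝[K] x) (𝓝 (f i x)) := by
    intro i
    obtain ⟨C, t, ht, hlip⟩ := hf i x hxK
    have hxt : x ∈ t := mem_of_mem_nhdsWithin hxK ht
    exact ((hlip.continuousOn).continuousWithinAt hxt).mono_left (nhdsWithin_le_of_mem ht)
  apply Set.Subset.antisymm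
  · intro y hy
    set S := {p : Xs d × Ys m | p.1 ∈ K ∧ p.2 ∈ Sigma0 f p.1} with hSdef
    set l := 𝓝 (x, y) ⊓ 𝓟 S with hldef
    have hne : l.NeBot := mem_closure_iff_clusterPt.mp hy
    have hSev : ∀ᶠ p in l, p ∈ S := by
      have : l ≤ 𝓟 S := inf_le_right
      exact this (Filter.mem_principal_self S)
    have htendfst : Tendsto Prod.fst l (𝓝 x) :=
      (continuous_fst.tendsto _).mono_left (inf_le_left.trans (le_of_eq rfl))
    have htendsnd : Tendsto Prod.snd l (𝓝 y) :=
      (continuous_snd.tendsto _).mono_left inf_le_left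
    have hKev : ∀ᶠ p in l, p.1 ∈ K := hSev.mono fun p hp => hp.1
    have htendfstK : Tendsto Prod.fst l (𝓝[K] x) := by
      rw [tendsto_nhdsWithin_iff]; exact ⟨htendfst, hKev⟩
    have hUev : ∀ᶠ p in l, p.1 ∈ U := htendfstK hU
    have hex : ∀ᶠ p in l, ∃ i j : Fin n,
        p.1 ∈ U ∧ f i p.1 ≠ f j p.1 ∧ ‖p.2 - f i p.1‖ = ‖p.2 - f j p.1‖ ∧
        ∀ k, ‖p.2 - f i p.1‖ ≤ ‖p.2 - f k p.1‖ := by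
      filter_upwards [hSev, hUev] with p hp hpU
      obtain ⟨i, j, h1, h2, h3⟩ := hp.2
      exact ⟨i, j, hpU, h1, h2, h3⟩
    have key : ∃ i j : Fin n, ∃ᶠ p in l,
        p.1 ∈ U ∧ f i p.1 ≠ f j p.1 ∧ ‖p.2 - f i p.1‖ = ‖p.2 - f j p.1‖ ∧
        ∀ k, ‖p.2 - f i p.1‖ ≤ ‖p.2 - f k p.1‖ := by
      by_contra hcon
      push_neg at hcon
      have hall : ∀ᶠ p in l, ∀ i j : Fin n,
          ¬(p.1 ∈ U ∧ f i p.1 ≠ f j p.1 ∧ ‖p.2 - f i p.1‖ = ‖p.2 - f j p.1‖ ∧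
            ∀ k, ‖p.2 - f i p.1‖ ≤ ‖p.2 - f k p.1‖) :=
        Filter.eventually_all.2 fun i => Filter.eventually_all.2 fun j =>
          (hcon i j).mono fun p hp hq => by
            obtain ⟨k, hk⟩ := hp hq.1 hq.2.1 hq.2.2.1
            exact absurd (hq.2.2.2 k) (not_le.mpr hk)
      obtain ⟨p, hp1, hp2⟩ := (hex.and hall).exists
      obtain ⟨i, j, hq⟩ := hp1
      exact hp2 i j hq
    obtain ⟨i, j, hfreq⟩ := key
    set l' := l ⊓ 𝓟 {p : Xs d × Ys m | p.1 ∈ U ∧ f i p.1 ≠ f j p.1 ∧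
        ‖p.2 - f i p.1‖ = ‖p.2 - f j p.1‖ ∧
        ∀ k, ‖p.2 - f i p.1‖ ≤ ‖p.2 - f k p.1‖} with hl'def
    have hne' : l'.NeBot := Filter.frequently_iff_neBot.mp hfreq
    have hQ : ∀ᶠ p in l', p.1 ∈ U ∧ f i p.1 ≠ f j p.1 ∧
        ‖p.2 - f i p.1‖ = ‖p.2 - f j p.1‖ ∧
        ∀ k, ‖p.2 - f i p.1‖ ≤ ‖p.2 - f k p.1‖ := by
      have : l' ≤ 𝓟 _ := inf_le_right
      exact this (Filter.mem_principal_self _)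
    have hnRij : ¬ R i j := by
      obtain ⟨p, hpU, hpne, _⟩ := hQ.exists
      exact fun hrij => hpne ((hR p.1 hpU i j).mpr hrij)
    have hxne : f i x ≠ f j x := fun h => hnRij ((hR x hxmemU i j).mp h)
    -- limits of the norm functions
    have htend : ∀ k : Fin n,
        Tendsto (fun p : Xs d × Ys m => ‖p.2 - f k p.1‖) l' (𝓝 ‖y - f k x‖) := by
      intro k
      have h1 : Tendsto (fun p : Xs d × Ys m => f k p.1) l' (𝓝 (f k x)) :=
        (hcont k).comp (htendfstK.mono_left inf_le_left)
      have h2 : Tendsto Prod.snd l' (𝓝 y) := htendsnd.mono_left inf_le_left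
      exact (h2.sub h1).norm
    refine ⟨i, j, hxne, ?_, ?_⟩
    · exact tendsto_nhds_unique
        ((htend i).congr' (hQ.mono fun p hp => hp.2.2.1)) (htend j)
    · intro k
      exact le_of_tendsto_of_tendsto (htend i) (htend k)
        (hQ.mono fun p hp => hp.2.2.2 k)
  · intro y hy
    exact subset_closure ⟨hxK, hy⟩

end Bif
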